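/- Let λ > 0, let σ be a real p×p matrix with σσᵀ invertible, set R := λ(σσᵀ)⁻¹, let B be a real n×p matrix, let V : ℝⁿ → ℝ be twice differentiable at x, let Z := exp(−V/λ), and set u* := −R⁻¹Bᵀ∇V(x). Then λ²·∇Z(x)ᵀBR⁻¹Bᵀ∇Z(x) = λ·tr(BσσᵀBᵀ·∇Z(x)∇Z(x)ᵀ), and consequently the quadratic terms cancel: (Bu*)ᵀ∇V(x) + (1/2)(u*)ᵀRu* + (1/2)tr(BσσᵀBᵀ·Hess V(x)) = −(λ/(2Z(x)))·tr(BσσᵀBᵀ·Hess Z(x)). -/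

import Mathlib

open Matrix

/-- The gradient of `V : ℝⁿ → ℝ` at `x`, as the vector of partial derivatives. -/
noncomputable def gradv {n : ℕ} (V : (Fin n → ℝ) → ℝ) (x : Fin n → ℝ) : Fin n → ℝ :=
  fun i => fderiv ℝ V x (Pi.single i 1)

/-- The Hessian of `V : ℝⁿ → ℝ` at `x`, as the matrix of second partial derivatives. -/
noncomputable def hessm {n : ℕ} (V : (Fin n → ℝ) → ℝ) (x : Fin n → ℝ) :
    Matrix (Fin n) (Fin n) ℝ :=
  Matrix.of fun i j => fderiv ℝ (fun y => fderiv ℝ V y (Pi.single j 1)) x (Pi.single i 1)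

private lemma trace_mul_vecMulVec {n : ℕ} (M : Matrix (Fin n) (Fin n) ℝ) (u v : Fin n → ℝ) :
    (M * vecMulVec u v).trace = v ⬝ᵥ (M *ᵥ u) := by
  simp [Matrix.trace, Matrix.diag, Matrix.mul_apply, Matrix.vecMulVec_apply,
    dotProduct, Matrix.mulVec, Finset.mul_sum]
  exact Finset.sum_congr rfl fun i _ => Finset.sum_congr rfl fun j _ => by ring

private lemma fderiv_expZ {n : ℕ} (lam : ℝ) (hlam : lam ≠ 0) (V : (Fin n → ℝ) → ℝ)
    (y : Fin n → ℝ) (hV : DifferentiableAt ℝ V y) :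
    fderiv ℝ (fun z => Real.exp (-V z / lam)) y
      = (-(Real.exp (-V y / lam)) / lam) • fderiv ℝ V y := by
  have hd : DifferentiableAt ℝ (fun z => -V z / lam) y := by fun_prop
  rw [fderiv_exp hd]
  have : (fun z => -V z / lam) = fun z => (-(1/lam)) * V z := by funext z; field_simp
  rw [this, fderiv_const_mul hV, smul_smul]
  congr 1
  field_simp

/-- Under the noise–control-cost compatibility condition `R = λ(σσᵀ)⁻¹`,
`λ²∇Z(x)ᵀBR⁻¹Bᵀ∇Z(x) = λ tr(BσσᵀBᵀ ∇Z(x)∇Z(x)ᵀ)`, and consequently the quadratic terms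
of the HJB equation cancel:
`(Bu*)ᵀ∇V(x) + (1/2)(u*)ᵀRu* + (1/2)tr(BσσᵀBᵀ Hess V(x)) = −(λ/(2Z(x)))tr(BσσᵀBᵀ Hess Z(x))`. -/
theorem quadratic_terms_cancel {n p : ℕ} (lam : ℝ) (hlam : 0 < lam)
    (sg : Matrix (Fin p) (Fin p) ℝ) (hsg : IsUnit (sg * sgᵀ).det)
    (R : Matrix (Fin p) (Fin p) ℝ) (hR : R = lam • (sg * sgᵀ)⁻¹)
    (B : Matrix (Fin n) (Fin p) ℝ)
    (V : (Fin n → ℝ) → ℝ) (x : Fin n → ℝ)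
    (hV1 : ∀ᶠ y in nhds x, DifferentiableAt ℝ V y)
    (hV2 : DifferentiableAt ℝ (fderiv ℝ V) x)
    (Z : (Fin n → ℝ) → ℝ) (hZ : Z = fun y => Real.exp (-V y / lam))
    (ustar : Fin p → ℝ) (hustar : ustar = -(R⁻¹ *ᵥ (Bᵀ *ᵥ gradv V x))) :
    lam ^ 2 * (gradv Z x ⬝ᵥ ((B * R⁻¹ * Bᵀ) *ᵥ gradv Z x)) =
      lam * ((B * sg * sgᵀ * Bᵀ) * vecMulVec (gradv Z x) (gradv Z x)).trace ∧
    ((B *ᵥ ustar) ⬝ᵥ gradv V x) + (1 / 2) * (ustar ⬝ᵥ (R *ᵥ ustar))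
        + (1 / 2) * ((B * sg * sgᵀ * Bᵀ) * hessm V x).trace =
      -(lam / (2 * Z x)) * ((B * sg * sgᵀ * Bᵀ) * hessm Z x).trace := by
  have hlam' : lam ≠ 0 := ne_of_gt hlam
  have hVx : DifferentiableAt ℝ V x := hV1.self_of_nhds
  set g : Fin n → ℝ := gradv V x with hg
  set zx : ℝ := Z x with hzx
  have hzpos : 0 < zx := by rw [hzx, hZ]; exact Real.exp_pos _
  have hzne : zx ≠ 0 := ne_of_gt hzpos
  -- R⁻¹ = lam⁻¹ • (sg sgᵀ)
  have hRinv : R⁻¹ = lam⁻¹ • (sg * sgᵀ) := by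
    apply Matrix.inv_eq_right_inv
    rw [hR, Matrix.smul_mul, Matrix.mul_smul, smul_smul, Matrix.nonsing_inv_mul _ hsg]
    rw [mul_inv_cancel₀ hlam', one_smul]
  have hRR : R * R⁻¹ = 1 := by
    rw [hRinv, hR, Matrix.smul_mul, Matrix.mul_smul, smul_smul, Matrix.nonsing_inv_mul _ hsg,
      mul_inv_cancel₀ hlam', one_smul]
  -- fderiv of Z near x
  have hfZ : ∀ y, DifferentiableAt ℝ V y →
      fderiv ℝ Z y = (-(Z y) / lam) • fderiv ℝ V y := by
    intro y hy
    rw [hZ]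
    exact fderiv_expZ lam hlam' V y hy
  have hZdiff : DifferentiableAt ℝ Z x := by
    rw [hZ]
    have hd : DifferentiableAt ℝ (fun z => -V z / lam) x := by fun_prop
    exact hd.exp
  -- gradient of Z
  have hgradZ : gradv Z x = (-zx / lam) • g := by
    funext i
    simp only [gradv, hg, Pi.smul_apply, smul_eq_mul]
    rw [hfZ x hVx]
    simp [hzx]
  -- Hessian of Z
  have hhessZ : hessm Z x = (zx / lam ^ 2) • vecMulVec g g - (zx / lam) • hessm V x := by
    funext i j
    have hbdiff : DifferentiableAt ℝ (fun y => fderiv ℝ V y (Pi.single j 1)) x :=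
      (ContinuousLinearMap.apply ℝ ℝ (Pi.single j 1 : Fin n → ℝ)).differentiableAt.comp x hV2
    have hadiff : DifferentiableAt ℝ (fun y => -(Z y) / lam) x := by fun_prop
    have heq : (fun y => fderiv ℝ Z y (Pi.single j 1))
        =ᶠ[nhds x] fun y => (-(Z y) / lam) * fderiv ℝ V y (Pi.single j 1) := by
      filter_upwards [hV1] with y hy
      rw [hfZ y hy]; simp
    have hij : hessm Z x i j
        = fderiv ℝ (fun y => (-(Z y) / lam) * fderiv ℝ V y (Pi.single j 1)) x (Pi.single i 1) := by
      simp only [hessm, Matrix.of_apply]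
      rw [heq.fderiv_eq]
    rw [hij, fderiv_fun_mul hadiff hbdiff]
    have hfa : fderiv ℝ (fun y => -(Z y) / lam) x = (-(1/lam)) • fderiv ℝ Z x := by
      have : (fun y => -(Z y) / lam) = fun y => (-(1/lam)) * Z y := by funext y; field_simp
      rw [this, fderiv_const_mul hZdiff]
    have hZi : fderiv ℝ Z x (Pi.single i 1) = (-zx / lam) * g i := by
      rw [hfZ x hVx]; simp [hg, gradv, hzx]
    simp only [ContinuousLinearMap.add_apply, ContinuousLinearMap.coe_smul', Pi.smul_apply,
      smul_eq_mul, hfa, hZi]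
    simp only [Matrix.sub_apply, Matrix.smul_apply, Matrix.vecMulVec_apply, smul_eq_mul,
      hessm, Matrix.of_apply, hg, gradv]
    field_simp
    ring
  constructor
  · -- first identity
    rw [trace_mul_vecMulVec, hgradZ, hRinv]
    rw [Matrix.mul_smul, Matrix.smul_mul, Matrix.smul_mulVec, Matrix.mulVec_smul]
    rw [dotProduct_smul, smul_dotProduct, Matrix.mulVec_smul, dotProduct_smul, smul_dotProduct]
    have hassoc : B * sg * sgᵀ * Bᵀ = B * (sg * sgᵀ) * Bᵀ := by rw [Matrix.mul_assoc B sg]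
    rw [hassoc]
    simp only [dotProduct_smul, smul_eq_mul]
    field_simp
  · -- second identity
    set A : Matrix (Fin n) (Fin n) ℝ := B * sg * sgᵀ * Bᵀ with hA
    set w : Fin p → ℝ := Bᵀ *ᵥ g with hw
    set q : ℝ := g ⬝ᵥ (A *ᵥ g) with hq
    have hqw : q = w ⬝ᵥ ((sg * sgᵀ) *ᵥ w) := by
      rw [hq, hA, hw]
      rw [show B * sg * sgᵀ * Bᵀ = B * ((sg * sgᵀ) * Bᵀ) by
        rw [Matrix.mul_assoc B sg, Matrix.mul_assoc]]
      rw [← Matrix.mulVec_mulVec, Matrix.dotProduct_mulVec g B, ← Matrix.mulVec_transpose B g,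
        ← Matrix.mulVec_mulVec]
    have hgB : ∀ s : Fin p → ℝ, g ⬝ᵥ (B *ᵥ s) = w ⬝ᵥ s := by
      intro s
      rw [Matrix.dotProduct_mulVec g B, ← Matrix.mulVec_transpose B g]
    have h1 : (B *ᵥ ustar) ⬝ᵥ g = -(lam⁻¹ * q) := by
      rw [dotProduct_comm, hgB, hustar, hRinv, Matrix.smul_mulVec]
      rw [dotProduct_neg, dotProduct_smul, smul_eq_mul, ← hqw]
    have h2 : ustar ⬝ᵥ (R *ᵥ ustar) = lam⁻¹ * q := by
      have hRu : R *ᵥ ustar = -w := by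
        rw [hustar, Matrix.mulVec_neg, Matrix.mulVec_mulVec, hRR, Matrix.one_mulVec]
      rw [hRu, hustar, hRinv, Matrix.smul_mulVec]
      rw [neg_dotProduct, dotProduct_neg, neg_neg, smul_dotProduct, smul_eq_mul]
      congr 1
      rw [hqw, dotProduct_comm]
    set t : ℝ := (A * hessm V x).trace with ht
    have h3 : (A * hessm Z x).trace = (zx / lam ^ 2) * q - (zx / lam) * t := by
      rw [hhessZ, Matrix.mul_sub, Matrix.mul_smul, Matrix.mul_smul, Matrix.trace_sub,
        Matrix.trace_smul, Matrix.trace_smul, trace_mul_vecMulVec, smul_eq_mul, smul_eq_mul,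
        ← hq, ht]
    rw [h1, h2, h3]
    field_simp
    ring
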